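/- Let α > 1 and β > 1 with 1/α + 1/β = 1, and let Ω_α = {(x,y) ∈ ℝ² : x > 0 and x^α − |y|^α ≥ 1}. Then the antipolar of Ω_α is Ω_β: Ω_α^◇ = {(p,q) ∈ ℝ² : p > 0 and p^β − |q|^β ≥ 1}. In particular, for α = 2, Ω_2^◇ = Ω_2. -/

import Mathlib

/-- The antipolar of a set `Ω ⊆ ℝ²`:
`Ω^◇ = {(p,q) : p·x − q·y ≥ 1 for all (x,y) ∈ Ω}`. -/
def antipolar (Ω : Set (ℝ × ℝ)) : Set (ℝ × ℝ) :=
  {pq | ∀ xy ∈ Ω, 1 ≤ pq.1 * xy.1 - pq.2 * xy.2}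

/-- The `α`-hyperbola `Ω_α = {(x,y) : x > 0, x^α − |y|^α ≥ 1}` (real powers). -/
def alphaHyperbola (α : ℝ) : Set (ℝ × ℝ) :=
  {xy : ℝ × ℝ | 0 < xy.1 ∧ 1 ≤ xy.1 ^ α - |xy.2| ^ α}

lemma holder2 {α β : ℝ} (hαβ : α.HolderConjugate β) {t s : ℝ} (ht : 0 ≤ t) (hs : 0 ≤ s) :
    1 + t * s ≤ (1 + t ^ α) ^ (1/α) * (1 + s ^ β) ^ (1/β) := by
  have h := Real.inner_le_Lp_mul_Lq_of_nonneg (Finset.univ : Finset (Fin 2))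
    (f := ![1, t]) (g := ![1, s]) hαβ
    (by intro i _; fin_cases i <;> simp [ht, hs])
    (by intro i _; fin_cases i <;> simp [ht, hs])
  simpa [Fin.sum_univ_two, Real.one_rpow] using h

lemma key (α β : ℝ) (hα : 1 < α) (hβ : 1 < β) (hαβ : 1 / α + 1 / β = 1) :
    antipolar (alphaHyperbola α) = alphaHyperbola β := by
  have hαβ' : α.HolderConjugate β := Real.holderConjugate_iff.mpr ⟨hα, by simpa [one_div] using hαβ⟩
  have hα0 : (0:ℝ) < α := lt_trans one_pos hα
  have hβ0 : (0:ℝ) < β := lt_trans one_pos hβ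
  ext ⟨p, q⟩
  constructor
  · intro h
    -- p ≥ 1
    have h1 : (1, (0:ℝ)) ∈ alphaHyperbola α := by
      constructor
      · norm_num
      · simp [Real.zero_rpow (ne_of_gt hα0)]
    have hp1 : 1 ≤ p := by simpa using h _ h1
    have hp : 0 < p := lt_of_lt_of_le one_pos hp1
    set Q := |q| with hQdef
    have hQ : 0 ≤ Q := abs_nonneg q
    set A : ℝ := 1 + Q ^ β with hA
    have hA0 : 0 < A := by positivity
    set t : ℝ := Q ^ (β/α) with htdef
    have ht : 0 ≤ t := Real.rpow_nonneg hQ _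
    have htα : t ^ α = Q ^ β := by
      rw [htdef, ← Real.rpow_mul hQ, div_mul_cancel₀ _ (ne_of_gt hα0)]
    set x : ℝ := A ^ (1/α) with hxdef
    have hx0 : 0 < x := Real.rpow_pos_of_pos hA0 _
    have hxα : x ^ α = A := by
      rw [hxdef, ← Real.rpow_mul (le_of_lt hA0), one_div, inv_mul_cancel₀ (ne_of_gt hα0),
        Real.rpow_one]
    set y : ℝ := if 0 ≤ q then t else -t with hydef
    have hy : |y| = t := by
      rw [hydef]; split <;> simp [abs_of_nonneg ht, ht]
    have hqy : q * y = Q * t := by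
      rw [hydef]; split
      · show q * t = |q| * t; rw [abs_of_nonneg ‹_›]
      · show q * (-t) = |q| * t; rw [abs_of_neg (lt_of_not_ge ‹_›)]; ring
    have hQt : Q * t = Q ^ β := by
      rcases eq_or_lt_of_le hQ with hQ0 | hQ0
      · rw [← hQ0]; simp [Real.zero_rpow (ne_of_gt hβ0)]
      · have he : Q ^ ((1:ℝ) + β/α) = Q ^ (1:ℝ) * Q ^ (β/α) := Real.rpow_add hQ0 1 (β/α)
        rw [Real.rpow_one] at he
        have hba : (1:ℝ) + β/α = β := by
          have h' := hαβ
          field_simp at h' ⊢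
          linarith
        rw [htdef, ← he, hba]
    have hmem : (x, y) ∈ alphaHyperbola α := by
      refine ⟨hx0, ?_⟩
      simp only [hxα, hy, htα]
      have : A - Q ^ β = 1 := by rw [hA]; ring
      linarith
    have h2 := h _ hmem
    simp only at h2
    rw [hqy, hQt] at h2
    have h3 : A ≤ p * x := by linarith [hA]
    have h4 : A ^ (1/β) ≤ p := by
      rw [show (1/β) = 1 - 1/α by linarith, Real.rpow_sub hA0, Real.rpow_one]
      rw [div_le_iff₀ (Real.rpow_pos_of_pos hA0 _)]
      exact h3.trans_eq (by rw [hxdef])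
    refine ⟨hp, ?_⟩
    have h5 : (A ^ (1/β)) ^ β ≤ p ^ β :=
      Real.rpow_le_rpow (Real.rpow_nonneg (le_of_lt hA0) _) h4 (le_of_lt hβ0)
    rw [← Real.rpow_mul (le_of_lt hA0), one_div, inv_mul_cancel₀ (ne_of_gt hβ0),
      Real.rpow_one] at h5
    rw [hA] at h5
    linarith
  · rintro ⟨hp, hpq⟩ ⟨x, y⟩ ⟨hx, hxy⟩
    simp only at *
    have h1 : (1 + |y| ^ α) ^ (1/α) ≤ x := by
      calc (1 + |y| ^ α) ^ (1/α) ≤ (x ^ α) ^ (1/α) :=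
            Real.rpow_le_rpow (by positivity) (by linarith) (by positivity)
        _ = x := by
            rw [← Real.rpow_mul hx.le, mul_one_div, div_self (ne_of_gt hα0), Real.rpow_one]
    have h2 : (1 + |q| ^ β) ^ (1/β) ≤ p := by
      calc (1 + |q| ^ β) ^ (1/β) ≤ (p ^ β) ^ (1/β) :=
            Real.rpow_le_rpow (by positivity) (by linarith) (by positivity)
        _ = p := by
            rw [← Real.rpow_mul (le_of_lt hp), mul_one_div, div_self (ne_of_gt hβ0),
              Real.rpow_one]
    have h3 := holder2 hαβ' (abs_nonneg y) (abs_nonneg q)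
    have h4 : 1 + |y| * |q| ≤ p * x := by
      calc 1 + |y| * |q| ≤ (1 + |y| ^ α) ^ (1/α) * (1 + |q| ^ β) ^ (1/β) := h3
        _ ≤ x * p := by
            apply mul_le_mul h1 h2 (Real.rpow_nonneg (by positivity) _) (le_of_lt (lt_of_lt_of_le _ h1))
            positivity
        _ = p * x := mul_comm _ _
    have h5 : q * y ≤ |q| * |y| := le_trans (le_abs_self _) (le_of_eq (abs_mul q y))
    linarith [mul_comm (|y|) (|q|)]

/-- For conjugate exponents `α, β > 1` with `1/α + 1/β = 1`, the antipolar of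
the `α`-hyperbola `Ω_α` is the `β`-hyperbola `Ω_β`; in particular
`Ω₂^◇ = Ω₂`. -/
theorem antipolar_alphaHyperbola (α β : ℝ) (hα : 1 < α) (hβ : 1 < β)
    (hαβ : 1 / α + 1 / β = 1) :
    antipolar (alphaHyperbola α) = alphaHyperbola β ∧
      antipolar (alphaHyperbola 2) = alphaHyperbola 2 :=
  ⟨key α β hα hβ hαβ, key 2 2 (by norm_num) (by norm_num) (by norm_num)⟩
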